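/- Let X be a topological space. Then the space C(X) of continuous real-valued functions on X, equipped with the graph topology τ_Γ, is a Baire space: the intersection of every countable family of dense open subsets of (C(X), τ_Γ) is dense. -/

import Mathlib

open TopologicalSpace Set

/-- The graph of a continuous map, as a subset of `X × Y`. -/
def graphSet {X Y : Type*} [TopologicalSpace X] [TopologicalSpace Y] (f : C(X, Y)) :
    Set (X × Y) := {p | p.2 = f p.1}

/-- The graph topology `τ_Γ` on `C(X, Y)`, generated by the sets
`F_G = {f | graph f ⊆ G}` for `G` open in `X × Y`. -/
def graphTopology (X Y : Type*) [TopologicalSpace X] [TopologicalSpace Y] :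
    TopologicalSpace C(X, Y) :=
  generateFrom {S | ∃ G : Set (X × Y), IsOpen G ∧ S = {f : C(X, Y) | graphSet f ⊆ G}}

namespace BaireGraphAux

variable {X : Type*} [TopologicalSpace X]

/-- An open "tube" around the graph of `f` of (lower semicontinuous) radius `ε`. -/
def tube (f : C(X, ℝ)) (ε : X → ℝ) : Set (X × ℝ) := {p | |p.2 - f p.1| < ε p.1}

lemma graph_subset_tube {f : C(X, ℝ)} {ε : X → ℝ} (hε : ∀ x, 0 < ε x) :
    graphSet f ⊆ tube f ε := by
  rintro ⟨x, y⟩ h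
  simp only [graphSet, mem_setOf_eq] at h
  simpa [tube, h] using hε x

lemma lsc_min {ε δ : X → ℝ} (hε : LowerSemicontinuous ε) (hδ : LowerSemicontinuous δ) :
    LowerSemicontinuous fun x => min (ε x) (δ x) := by
  intro x c hc
  simp only [lt_min_iff] at hc
  filter_upwards [hε x c hc.1, hδ x c hc.2] with y h1 h2
  simp [lt_min_iff, h1, h2]

lemma lsc_div3 {ε : X → ℝ} (hε : LowerSemicontinuous ε) :
    LowerSemicontinuous fun x => ε x / 3 := by
  intro x c hc
  have : 3 * c < ε x := by linarith
  filter_upwards [hε x _ this] with y h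
  linarith

lemma lsc_half {ε : X → ℝ} (hε : LowerSemicontinuous ε) :
    LowerSemicontinuous fun x => ε x / 2 := by
  intro x c hc
  have : 2 * c < ε x := by linarith
  filter_upwards [hε x _ this] with y h
  linarith

lemma tube_isOpen (f : C(X, ℝ)) {ε : X → ℝ} (hε : LowerSemicontinuous ε) :
    IsOpen (tube f ε) := by
  have h1 : LowerSemicontinuous fun p : X × ℝ => ε p.1 :=
    hε.comp continuous_fst
  have h2 : LowerSemicontinuous fun p : X × ℝ => -|p.2 - f p.1| :=
    (Continuous.neg (continuous_abs.comp
      (continuous_snd.sub (f.continuous.comp continuous_fst)))).lowerSemicontinuous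
  have h3 : LowerSemicontinuous fun p : X × ℝ => ε p.1 + -|p.2 - f p.1| := h1.add h2
  have : tube f ε = (fun p : X × ℝ => ε p.1 + -|p.2 - f p.1|) ⁻¹' Ioi 0 := by
    ext p
    simp only [tube, mem_setOf_eq, mem_preimage, mem_Ioi]
    constructor <;> intro h <;> linarith
  rw [this]
  exact h3.isOpen_preimage 0

/-- Key selection lemma: any open set containing the graph of `f` contains a tube of
positive lower semicontinuous radius. -/
lemma exists_lsc_tube (f : C(X, ℝ)) {G : Set (X × ℝ)} (hG : IsOpen G)
    (hfG : graphSet f ⊆ G) :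
    ∃ ε : X → ℝ, LowerSemicontinuous ε ∧ (∀ x, 0 < ε x) ∧ (∀ x, ε x ≤ 1) ∧ tube f ε ⊆ G := by
  set S : X → Set ℝ := fun x => {r | 0 ≤ r ∧ r ≤ 1 ∧ ∀ y : ℝ, |y - f x| ≤ r → (x, y) ∈ G}
    with hS
  have hmemG : ∀ x, (x, f x) ∈ G := fun x => hfG (by simp [graphSet])
  have h0S : ∀ x, (0 : ℝ) ∈ S x := by
    intro x
    refine ⟨le_refl _, zero_le_one, fun y hy => ?_⟩
    have : y = f x := by
      have := abs_nonneg (y - f x)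
      have h1 : |y - f x| = 0 := le_antisymm hy this
      have := abs_eq_zero.1 h1
      linarith
    rw [this]; exact hmemG x
  have hbdd : ∀ x, BddAbove (S x) := fun x => ⟨1, fun r hr => hr.2.1⟩
  have hne : ∀ x, (S x).Nonempty := fun x => ⟨0, h0S x⟩
  refine ⟨fun x => sSup (S x), ?_, ?_, ?_, ?_⟩
  · -- lower semicontinuity
    intro x₀ c hc
    rcases lt_or_ge c 0 with hc0 | hc0
    · filter_upwards with y
      exact lt_of_lt_of_le hc0 (le_csSup (hbdd y) (h0S y))
    · obtain ⟨r, hrS, hcr⟩ := exists_lt_of_lt_csSup (hne x₀) hc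
      have hr0 : 0 < r := lt_of_le_of_lt hc0 hcr
      have hK : ({x₀} : Set X) ×ˢ Icc (f x₀ - r) (f x₀ + r) ⊆ G := by
        rintro ⟨x, y⟩ ⟨hx, hy⟩
        simp only [mem_singleton_iff] at hx
        subst hx
        exact hrS.2.2 y (abs_sub_le_iff.2 ⟨by linarith [hy.2], by linarith [hy.1]⟩)
      obtain ⟨u, v, huo, hvo, hxu, hKv, huv⟩ :=
        generalized_tube_lemma isCompact_singleton isCompact_Icc hG hK
      set c' := (c + r) / 2 with hc'
      have hcc' : c < c' := by simp [hc']; linarith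
      have hc'r : c' < r := by simp [hc']; linarith
      have hfx : Continuous f := f.continuous
      have hmem : u ∩ f ⁻¹' Metric.ball (f x₀) (r - c') ∈ nhds x₀ := by
        refine Filter.inter_mem (huo.mem_nhds (hxu rfl)) ?_
        exact hfx.continuousAt.preimage_mem_nhds
          (Metric.ball_mem_nhds _ (by linarith))
      filter_upwards [hmem] with x hx
      have hc'S : c' ∈ S x := by
        refine ⟨by linarith, by linarith [hrS.2.1], fun y hy => ?_⟩
        have hfxd : |f x - f x₀| < r - c' := by
          have := hx.2
          simpa [Real.dist_eq] using this
        have htri : |y - f x₀| ≤ |y - f x| + |f x - f x₀| := abs_sub_le _ _ _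
        have hyr : |y - f x₀| ≤ r := by linarith
        obtain ⟨h2a, h2b⟩ := abs_sub_le_iff.1 hyr
        have hyK : y ∈ Icc (f x₀ - r) (f x₀ + r) := ⟨by linarith, by linarith⟩
        exact huv ⟨hx.1, hKv hyK⟩
      exact lt_of_lt_of_le hcc' (le_csSup (hbdd x) hc'S)
  · intro x
    obtain ⟨r, hr0, hrG⟩ : ∃ r > 0, Metric.closedBall (f x) r ⊆ {y | (x, y) ∈ G} := by
      have hopen : IsOpen {y : ℝ | (x, y) ∈ G} :=
        hG.preimage (Continuous.prodMk_right x)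
      obtain ⟨r, hr0, hrb⟩ := Metric.isOpen_iff.1 hopen (f x) (hmemG x)
      exact ⟨r / 2, by linarith, fun y hy =>
        hrb (lt_of_le_of_lt (Metric.mem_closedBall.1 hy) (by linarith))⟩
    have : min r 1 ∈ S x := by
      refine ⟨le_min (le_of_lt hr0) zero_le_one, min_le_right _ _, fun y hy => ?_⟩
      exact hrG (Metric.mem_closedBall.2 (by
        rw [Real.dist_eq]
        exact le_trans hy (min_le_left _ _)))
    exact lt_of_lt_of_le (lt_min hr0 zero_lt_one) (le_csSup (hbdd x) this)
  · exact fun x => csSup_le (hne x) fun r hr => hr.2.1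
  · rintro ⟨x, y⟩ hxy
    simp only [tube, mem_setOf_eq] at hxy
    obtain ⟨r, hrS, hlt⟩ := exists_lt_of_lt_csSup (hne x) hxy
    exact hrS.2.2 y (le_of_lt hlt)

/-- Every `τ_Γ`-open set containing `f` contains a basic set `F_G` containing `f`. -/
lemma exists_basic' {U : Set C(X, ℝ)}
    (hU : TopologicalSpace.GenerateOpen
      {S | ∃ G : Set (X × ℝ), IsOpen G ∧ S = {f : C(X, ℝ) | graphSet f ⊆ G}} U) :
    ∀ f ∈ U,
      ∃ G : Set (X × ℝ), IsOpen G ∧ graphSet f ⊆ G ∧ {h : C(X, ℝ) | graphSet h ⊆ G} ⊆ U := by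
  induction hU with
  | basic S hs =>
    obtain ⟨G, hG, rfl⟩ := hs
    exact fun f hf => ⟨G, hG, hf, subset_rfl⟩
  | univ => exact fun f _ => ⟨univ, isOpen_univ, subset_univ _, subset_univ _⟩
  | inter U₁ U₂ h₁ h₂ ih₁ ih₂ =>
    intro f hf
    obtain ⟨G₁, hG₁, hf₁, hs₁⟩ := ih₁ f hf.1
    obtain ⟨G₂, hG₂, hf₂, hs₂⟩ := ih₂ f hf.2
    refine ⟨G₁ ∩ G₂, hG₁.inter hG₂, subset_inter hf₁ hf₂, fun h hh => ?_⟩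
    exact ⟨hs₁ fun p hp => (hh hp).1, hs₂ fun p hp => (hh hp).2⟩
  | sUnion 𝒮 h ih =>
    rintro f ⟨V, hV, hfV⟩
    obtain ⟨G, hG, hfG, hs⟩ := ih V hV f hfV
    exact ⟨G, hG, hfG, hs.trans (subset_sUnion_of_mem hV)⟩

lemma exists_basic {U : Set C(X, ℝ)} (hU : @IsOpen _ (graphTopology X ℝ) U) {f : C(X, ℝ)}
    (hf : f ∈ U) :
    ∃ G : Set (X × ℝ), IsOpen G ∧ graphSet f ⊆ G ∧ {h : C(X, ℝ) | graphSet h ⊆ G} ⊆ U :=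
  exists_basic' hU f hf

lemma basic_isOpen {G : Set (X × ℝ)} (hG : IsOpen G) :
    @IsOpen _ (graphTopology X ℝ) {h : C(X, ℝ) | graphSet h ⊆ G} :=
  TopologicalSpace.GenerateOpen.basic _ ⟨G, hG, rfl⟩

/-- The inductive step. -/
lemma step (D : Set C(X, ℝ)) (hDo : @IsOpen _ (graphTopology X ℝ) D)
    (hDd : @Dense _ (graphTopology X ℝ) D)
    (f : C(X, ℝ)) (ε : X → ℝ) (hlsc : LowerSemicontinuous ε) (hpos : ∀ x, 0 < ε x) :
    ∃ p : C(X, ℝ) × (X → ℝ),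
      LowerSemicontinuous p.2 ∧ (∀ x, 0 < p.2 x) ∧ (∀ x, p.2 x ≤ ε x / 3) ∧
      tube p.1 p.2 ⊆ tube f (fun x => ε x / 2) ∧
      {h : C(X, ℝ) | graphSet h ⊆ tube p.1 p.2} ⊆ D := by
  set T : Set (X × ℝ) := tube f (fun x => ε x / 2) with hT
  have hTo : IsOpen T := tube_isOpen f (lsc_half hlsc)
  have hFTo : @IsOpen _ (graphTopology X ℝ) {h : C(X, ℝ) | graphSet h ⊆ T} := basic_isOpen hTo
  have hFTne : {h : C(X, ℝ) | graphSet h ⊆ T}.Nonempty :=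
    ⟨f, graph_subset_tube fun x => by have := hpos x; positivity⟩
  obtain ⟨g, hgFT, hgD⟩ :=
    @Dense.inter_open_nonempty _ (graphTopology X ℝ) _ hDd _ hFTo hFTne
  obtain ⟨G, hGo, hgG, hGD⟩ := exists_basic hDo hgD
  have hgGT : graphSet g ⊆ G ∩ T := subset_inter hgG hgFT
  obtain ⟨φ, hφlsc, hφpos, hφle, hφsub⟩ := exists_lsc_tube g (hGo.inter hTo) hgGT
  refine ⟨(g, fun x => min (φ x) (ε x / 3)), lsc_min hφlsc (lsc_div3 hlsc),
    fun x => lt_min (hφpos x) (by have := hpos x; positivity), fun x => min_le_right _ _,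
    ?_, ?_⟩
  · intro p hp
    have : p ∈ tube g φ := by
      simp only [tube, mem_setOf_eq] at hp ⊢
      exact lt_of_lt_of_le hp (min_le_left _ _)
    exact (hφsub this).2
  · intro h hh
    refine hGD fun p hp => ?_
    have : p ∈ tube g φ := by
      have := hh hp
      simp only [tube, mem_setOf_eq] at this ⊢
      exact lt_of_lt_of_le this (min_le_left _ _)
    exact (hφsub this).1

end BaireGraphAux

open BaireGraphAux in
/-- `(C(X), τ_Γ)` is a Baire space: every countable intersection of
dense open sets is dense. -/
theorem baireSpace_graphTopology (X : Type*) [TopologicalSpace X] :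
    @BaireSpace C(X, ℝ) (graphTopology X ℝ) := by
  letI := graphTopology X ℝ
  refine ⟨fun D hDo hDd => ?_⟩
  rw [dense_iff_inter_open]
  rintro U hU ⟨f₀, hf₀⟩
  obtain ⟨G₀, hG₀o, hf₀G₀, hG₀U⟩ := exists_basic hU hf₀
  obtain ⟨ε₀, hε₀lsc, hε₀pos, hε₀le, hε₀sub⟩ := exists_lsc_tube f₀ hG₀o hf₀G₀
  -- build the sequence of shrinking tubes
  let Inv : C(X, ℝ) × (X → ℝ) → Prop := fun p => LowerSemicontinuous p.2 ∧ ∀ x, 0 < p.2 x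
  let next : ℕ → {p // Inv p} → {p // Inv p} := fun n q =>
    ⟨(step (D n) (hDo n) (hDd n) q.1.1 q.1.2 q.2.1 q.2.2).choose,
     (step (D n) (hDo n) (hDd n) q.1.1 q.1.2 q.2.1 q.2.2).choose_spec.1,
     (step (D n) (hDo n) (hDd n) q.1.1 q.1.2 q.2.1 q.2.2).choose_spec.2.1⟩
  let seq : ℕ → {p // Inv p} := fun n =>
    Nat.rec (motive := fun _ => {p // Inv p}) ⟨(f₀, ε₀), hε₀lsc, hε₀pos⟩ next n
  let F : ℕ → C(X, ℝ) := fun n => (seq n).1.1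
  let E : ℕ → X → ℝ := fun n => (seq n).1.2
  have hspec : ∀ n,
      LowerSemicontinuous (E (n + 1)) ∧ (∀ x, 0 < E (n + 1) x) ∧
      (∀ x, E (n + 1) x ≤ E n x / 3) ∧
      tube (F (n + 1)) (E (n + 1)) ⊆ tube (F n) (fun x => E n x / 2) ∧
      {h : C(X, ℝ) | graphSet h ⊆ tube (F (n + 1)) (E (n + 1))} ⊆ D n := fun n =>
    (step (D n) (hDo n) (hDd n) (F n) (E n) (seq n).2.1 (seq n).2.2).choose_spec
  have hEpos : ∀ n x, 0 < E n x := fun n => (seq n).2.2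
  have hE0 : ∀ x, E 0 x ≤ 1 := hε₀le
  have h3 : ∀ n x, E (n + 1) x ≤ E n x / 3 := fun n => (hspec n).2.2.1
  have h4 : ∀ n, tube (F (n + 1)) (E (n + 1)) ⊆ tube (F n) (fun x => E n x / 2) :=
    fun n => (hspec n).2.2.2.1
  have h5 : ∀ n, {h : C(X, ℝ) | graphSet h ⊆ tube (F (n + 1)) (E (n + 1))} ⊆ D n :=
    fun n => (hspec n).2.2.2.2
  have hEle : ∀ n x, E n x ≤ (1 / 3 : ℝ) ^ n := by
    intro n
    induction n with
    | zero => simpa using hE0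
    | succ n ih =>
      intro x
      have := h3 n x
      have := ih x
      rw [pow_succ]
      linarith
  have hgeom : ∀ n d x, E (n + d) x ≤ (1 / 3 : ℝ) ^ d * E n x := by
    intro n d
    induction d with
    | zero => intro x; simp
    | succ d ih =>
      intro x
      have h1 := h3 (n + d) x
      have h2 := ih x
      rw [pow_succ]
      calc E (n + (d + 1)) x = E ((n + d) + 1) x := by ring_nf
        _ ≤ E (n + d) x / 3 := h1
        _ ≤ ((1 / 3 : ℝ) ^ d * E n x) / 3 := by linarith
        _ = (1 / 3 : ℝ) ^ d * (1 / 3) * E n x := by ring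
  have hFF : ∀ n x, |F (n + 1) x - F n x| < E n x / 2 := by
    intro n x
    have hg : graphSet (F (n + 1)) ⊆ tube (F (n + 1)) (E (n + 1)) :=
      graph_subset_tube (hEpos (n + 1))
    have : ((x, F (n + 1) x) : X × ℝ) ∈ tube (F n) (fun x => E n x / 2) :=
      h4 n (hg (by simp [graphSet]))
    simpa [tube] using this
  have key : ∀ n d x, |F (n + d) x - F n x| ≤ 3 / 4 * (1 - (1 / 3 : ℝ) ^ d) * E n x := by
    intro n d
    induction d with
    | zero => intro x; simp
    | succ d ih =>
      intro x
      have h1 : |F (n + d + 1) x - F (n + d) x| < E (n + d) x / 2 := hFF (n + d) x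
      have h2 := ih x
      have h6 : E (n + d) x ≤ (1 / 3 : ℝ) ^ d * E n x := hgeom n d x
      have htri : |F (n + (d + 1)) x - F n x| ≤
          |F (n + d + 1) x - F (n + d) x| + |F (n + d) x - F n x| := by
        have : n + (d + 1) = n + d + 1 := by ring
        rw [this]
        exact abs_sub_le _ _ _
      have hEn : 0 < E n x := hEpos n x
      rw [pow_succ]
      nlinarith [htri]
  -- pointwise limit
  have hcauchy : ∀ x, ∃ L : ℝ, Filter.Tendsto (fun n => F n x) Filter.atTop (nhds L) := by
    intro x
    refine cauchySeq_tendsto_of_complete ?_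
    refine cauchySeq_of_le_tendsto_0 (fun N => (3 / 2 : ℝ) * (1 / 3) ^ N) ?_ ?_
    · intro n m N hn hm
      have hb : ∀ k, N ≤ k → |F k x - F N x| ≤ 3 / 4 * E N x := by
        intro k hk
        obtain ⟨d, rfl⟩ := Nat.exists_eq_add_of_le hk
        have := key N d x
        have hp : (0 : ℝ) ≤ (1 / 3 : ℝ) ^ d := by positivity
        nlinarith [hEpos N x]
      have h1 := hb n hn
      have h2 := hb m hm
      have hEN : E N x ≤ (1 / 3 : ℝ) ^ N := hEle N x
      have : |F n x - F m x| ≤ |F n x - F N x| + |F N x - F m x| := abs_sub_le _ _ _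
      rw [Real.dist_eq]
      have h2' : |F N x - F m x| = |F m x - F N x| := abs_sub_comm _ _
      nlinarith
    · have : Filter.Tendsto (fun N : ℕ => ((1 : ℝ) / 3) ^ N) Filter.atTop (nhds 0) :=
        tendsto_pow_atTop_nhds_zero_of_lt_one (by norm_num) (by norm_num)
      simpa using this.const_mul (3 / 2 : ℝ)
  choose L hL using hcauchy
  have hLbound : ∀ n x, |L x - F n x| ≤ 3 / 4 * E n x := by
    intro n x
    have htend : Filter.Tendsto (fun m => |F m x - F n x|) Filter.atTop
        (nhds (|L x - F n x|)) := by
      have := (hL x).sub_const (F n x)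
      exact this.abs
    refine le_of_tendsto htend ?_
    filter_upwards [Filter.eventually_ge_atTop n] with m hm
    obtain ⟨d, rfl⟩ := Nat.exists_eq_add_of_le hm
    have := key n d x
    have hp : (0 : ℝ) ≤ (1 / 3 : ℝ) ^ d := by positivity
    nlinarith [hEpos n x]
  -- the limit is continuous
  have huc : TendstoUniformly (fun n x => F n x) L Filter.atTop := by
    rw [Metric.tendstoUniformly_iff]
    intro δ hδ
    have : Filter.Tendsto (fun n : ℕ => (3 / 4 : ℝ) * (1 / 3) ^ n) Filter.atTop (nhds 0) := by
      have : Filter.Tendsto (fun n : ℕ => ((1 : ℝ) / 3) ^ n) Filter.atTop (nhds 0) :=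
        tendsto_pow_atTop_nhds_zero_of_lt_one (by norm_num) (by norm_num)
      simpa using this.const_mul (3 / 4 : ℝ)
    have hev : ∀ᶠ n : ℕ in Filter.atTop, (3 / 4 : ℝ) * (1 / 3) ^ n < δ := by
      have := this.eventually (eventually_lt_nhds hδ)
      simpa using this
    filter_upwards [hev] with n hn x
    have h1 := hLbound n x
    have h2 := hEle n x
    rw [Real.dist_eq]
    have hEn := hEpos n x
    calc |L x - F n x| ≤ 3 / 4 * E n x := h1
      _ ≤ 3 / 4 * (1 / 3) ^ n := by linarith
      _ < δ := hn
  have hLcont : Continuous L :=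
    huc.continuous (Filter.Frequently.of_forall fun n => (F n).continuous)
  let fL : C(X, ℝ) := ⟨L, hLcont⟩
  have hgraph : ∀ n, graphSet fL ⊆ tube (F n) (E n) := by
    intro n
    rintro ⟨x, y⟩ hy
    simp only [graphSet, mem_setOf_eq] at hy
    simp only [tube, mem_setOf_eq, hy]
    have h1 := hLbound n x
    have h2 := hEpos n x
    calc |fL x - F n x| = |L x - F n x| := rfl
      _ ≤ 3 / 4 * E n x := h1
      _ < E n x := by linarith
  refine ⟨fL, ?_, ?_⟩
  · exact hG₀U fun p hp => hε₀sub (hgraph 0 hp)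
  · exact mem_iInter.2 fun n => h5 n (hgraph (n + 1))
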